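/- There exist constants c > 0 and C > 0, depending only on upper bounds for |q_0|, |a|, C_TAME and T, such that for every tame discrete controlled process with parameter a as in the context, every 0 ≤ ν < N, and every Q with C ≤ Q ≤ (Δt_ν)^{−1/1000}, almost surely on the event {|q_ν| ≤ Q}: Prob[ |Δq_ν| + |Δζ_{1,ν}| + |Δζ_{2,ν}| > (Δt_ν)^{2/5} | F_ν ] ≤ C·(Δt_ν)^{1000}. -/

import Mathlib

open MeasureTheory ProbabilityTheory Real
open scoped NNReal

noncomputable def dtStar (a dt : ℝ) : ℝ := if a = 0 then dt else (Real.exp (a * dt) - 1) / a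

noncomputable def dtTilde (a dt : ℝ) : ℝ :=
  if a = 0 then dt else (Real.exp (2 * a * dt) - 1) / (2 * a)

def IsPartition (N : ℕ) (T : ℝ) (t : ℕ → ℝ) : Prop :=
  t 0 = 0 ∧ t N = T ∧ ∀ ν < N, t ν < t (ν + 1)

noncomputable def dtMax (N : ℕ) (t : ℕ → ℝ) : ℝ := ⨆ ν : Fin N, (t (ν + 1) - t ν)

structure TameProcess {Ω : Type*} {mΩ : MeasurableSpace Ω} (μ : Measure Ω)
    (N : ℕ) (t : ℕ → ℝ) (a q0 Ct : ℝ) (F : Filtration ℕ mΩ)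
    (q u ΔW : ℕ → Ω → ℝ) : Prop where
  w_meas : ∀ ν < N, Measurable[F (ν + 1)] (ΔW ν)
  w_indep : ∀ ν < N, Indep (MeasurableSpace.comap (ΔW ν) inferInstance) (F ν) μ
  w_law : ∀ ν < N, μ.map (ΔW ν) = gaussianReal 0 (dtTilde a (t (ν + 1) - t ν)).toNNReal
  q_meas : ∀ ν ≤ N, Measurable[F ν] (q ν)
  u_meas : ∀ ν < N, Measurable[F ν] (u ν)
  q_init : ∀ᵐ ω ∂μ, q 0 ω = q0
  q_step : ∀ ν < N, ∀ᵐ ω ∂μ, q (ν + 1) ω =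
      q ν ω + (a * q ν ω + u ν ω) * dtStar a (t (ν + 1) - t ν) + ΔW ν ω
  u_tame : ∀ ν < N, ∀ᵐ ω ∂μ, |u ν ω| ≤ Ct * (|q ν ω| + 1)

noncomputable def zeta1 {Ω : Type*} (t : ℕ → ℝ) (q u : ℕ → Ω → ℝ) (ν : ℕ) (ω : Ω) : ℝ :=
  ∑ μ ∈ Finset.range ν, q μ ω * ((q (μ + 1) ω - q μ ω) - u μ ω * (t (μ + 1) - t μ))

noncomputable def zeta2 {Ω : Type*} (t : ℕ → ℝ) (q : ℕ → Ω → ℝ) (ν : ℕ) (ω : Ω) : ℝ :=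
  ∑ μ ∈ Finset.range ν, (q μ ω) ^ 2 * (t (μ + 1) - t μ)

lemma dtStar_pos {a δ : ℝ} (hδ : 0 < δ) : 0 < dtStar a δ := by
  unfold dtStar
  split_ifs with h
  · exact hδ
  rcases lt_or_gt_of_ne h with ha | ha
  · have h1 : Real.exp (a * δ) < 1 := by
      rw [← Real.exp_zero]
      exact Real.exp_lt_exp.mpr (by nlinarith)
    exact div_pos_of_neg_of_neg (by linarith) ha
  · have h1 : 1 < Real.exp (a * δ) := by
      have := Real.add_one_le_exp (a * δ)
      nlinarith
    exact div_pos (by linarith) ha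

lemma dtStar_le {a δ : ℝ} (hδ : 0 < δ) : dtStar a δ ≤ δ * Real.exp (|a| * δ) := by
  unfold dtStar
  split_ifs with h
  · simp [h]
  rcases lt_or_gt_of_ne h with ha | ha
  · rw [abs_of_neg ha, div_le_iff_of_neg ha]
    have key := Real.add_one_le_exp (a * δ)
    have hE1 : 1 ≤ Real.exp (-a * δ) := Real.one_le_exp (by nlinarith)
    nlinarith [mul_nonneg (mul_nonneg (neg_nonneg.mpr ha.le) hδ.le)
      (sub_nonneg.mpr hE1)]
  · rw [abs_of_pos ha, div_le_iff₀ ha]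
    have h1 := Real.add_one_le_exp (-(a * δ))
    rw [Real.exp_neg] at h1
    have h2 := Real.exp_pos (a * δ)
    have h3 : (1 - a * δ) * Real.exp (a * δ) ≤ 1 := by
      rw [← one_div] at h1
      have := (le_div_iff₀ h2).mp h1
      linarith
    nlinarith

lemma dtTilde_eq (a δ : ℝ) : dtTilde a δ = dtStar (2 * a) δ := by
  unfold dtTilde dtStar
  rcases eq_or_ne a 0 with h | h
  · simp [h]
  · rw [if_neg h, if_neg (mul_ne_zero two_ne_zero h)]

lemma gauss_tail (v : ℝ≥0) (hv : 0 < (v : ℝ)) (r : ℝ) (hr : 0 ≤ r) :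
    (gaussianReal 0 v {x | r ≤ |x|}).toReal ≤
      Real.sqrt 2 * Real.exp (-(r ^ 2) / (4 * (v : ℝ))) := by
  have hv0 : v ≠ 0 := fun h => by simp [h] at hv
  have h2v0 : (2 * v : ℝ≥0) ≠ 0 := by simp [hv0]
  have hs : MeasurableSet {x : ℝ | r ≤ |x|} :=
    (isClosed_le continuous_const continuous_abs).measurableSet
  rw [gaussianReal_apply_eq_integral 0 hv0,
    ENNReal.toReal_ofReal (setIntegral_nonneg hs fun x _ => gaussianPDFReal_nonneg _ _ _)]
  set c := Real.sqrt 2 * Real.exp (-(r ^ 2) / (4 * (v : ℝ))) with hc_def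
  have hc : 0 ≤ c := by positivity
  have hπ := Real.pi_pos
  have hpt : ∀ x ∈ {x : ℝ | r ≤ |x|},
      gaussianPDFReal 0 v x ≤ c * gaussianPDFReal 0 (2 * v) x := by
    intro x hx
    simp only [Set.mem_setOf_eq] at hx
    have hx2 : r ^ 2 ≤ x ^ 2 := by
      have := pow_le_pow_left₀ hr hx 2
      rwa [sq_abs] at this
    unfold gaussianPDFReal
    push_cast
    have hsqrt : Real.sqrt (2 * π * (2 * (v : ℝ))) = Real.sqrt 2 * Real.sqrt (2 * π * v) := by
      rw [show (2 : ℝ) * π * (2 * v) = 2 * (2 * π * v) by ring, Real.sqrt_mul (by norm_num)]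
    rw [hsqrt, hc_def]
    have hS : 0 < Real.sqrt (2 * π * (v : ℝ)) := Real.sqrt_pos.mpr (by positivity)
    have hs2 : (0:ℝ) < Real.sqrt 2 := by positivity
    rw [mul_inv, show Real.sqrt 2 * Real.exp (-(r ^ 2) / (4 * (v:ℝ))) *
        ((Real.sqrt 2)⁻¹ * (Real.sqrt (2 * π * v))⁻¹ *
          Real.exp (-(x - 0) ^ 2 / (2 * (2 * (v:ℝ))))) =
      (Real.sqrt 2 * (Real.sqrt 2)⁻¹) * ((Real.sqrt (2 * π * v))⁻¹ *
        (Real.exp (-(r ^ 2) / (4 * (v:ℝ))) * Real.exp (-(x - 0) ^ 2 / (2 * (2 * (v:ℝ)))))) from by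
        ring, mul_inv_cancel₀ hs2.ne', one_mul]
    refine mul_le_mul_of_nonneg_left ?_ (by positivity)
    rw [← Real.exp_add]
    apply Real.exp_le_exp.mpr
    rw [div_add_div _ _ (by positivity) (by positivity)]
    rw [div_le_div_iff₀ (by positivity) (by positivity)]
    nlinarith [hv, hx2, mul_le_mul_of_nonneg_right hx2 (sq_nonneg (v:ℝ)), mul_pos hv hv]
  calc ∫ x in {x : ℝ | r ≤ |x|}, gaussianPDFReal 0 v x
      ≤ ∫ x in {x : ℝ | r ≤ |x|}, c * gaussianPDFReal 0 (2 * v) x :=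
        setIntegral_mono_on (integrable_gaussianPDFReal 0 v).restrict
          (((integrable_gaussianPDFReal 0 (2 * v)).const_mul c).restrict) hs hpt
    _ ≤ ∫ x, c * gaussianPDFReal 0 (2 * v) x :=
        setIntegral_le_integral ((integrable_gaussianPDFReal 0 (2 * v)).const_mul c)
          (Filter.Eventually.of_forall fun x =>
            mul_nonneg hc (gaussianPDFReal_nonneg _ _ _))
    _ = c := by
        rw [integral_const_mul, integral_gaussianPDFReal_eq_one 0 h2v0, mul_one]


lemma sum_bound (M Q E δ r T1 T2 T3 : ℝ) (hM0 : 0 ≤ M) (hQ1 : 1 ≤ Q) (hE1 : 1 ≤ E)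
    (hδ : 0 < δ) (hr : 0 < r)
    (h1 : T1 ≤ 3 * M * Q * (δ * E) + r)
    (h2 : T2 ≤ Q * ((3 * M * Q * (δ * E) + r) + 2 * M * Q * δ))
    (h3 : T3 ≤ Q ^ 2 * δ) :
    T1 + T2 + T3 ≤ 9 * (M + 1) * E * (Q ^ 2 * δ) + 2 * Q * r := by
  have hint1 : 0 ≤ M * Q * (Q - 1) * (δ * E) :=
    mul_nonneg (mul_nonneg (mul_nonneg hM0 (by linarith)) (by linarith)) (by positivity)
  have hint2 : 0 ≤ (Q - 1) * r := mul_nonneg (by linarith) hr.le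
  have hint3 : 0 ≤ 2 * M * Q ^ 2 * δ * (E - 1) := by
    refine mul_nonneg (by positivity) (by linarith)
  have hint4 : 0 ≤ Q ^ 2 * δ * (E - 1) := mul_nonneg (by positivity) (by linarith)
  have hint5 : 0 ≤ (M + 8) * (Q ^ 2 * δ * E) := by positivity
  have hint6 : 0 ≤ 6 * M * Q * (Q - 1) * (δ * E) :=
    mul_nonneg (mul_nonneg (mul_nonneg (by positivity) (by linarith)) (by linarith))
      (by positivity)
  nlinarith [h1, h2, h3]

lemma u_bound (M Q Ct x uu : ℝ) (hCtM : Ct ≤ M) (hM0 : 0 ≤ M) (hQ1 : 1 ≤ Q)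
    (hx : |x| ≤ Q) (ht : |uu| ≤ Ct * (|x| + 1)) : |uu| ≤ 2 * M * Q := by
  nlinarith [abs_nonneg x, mul_nonneg (sub_nonneg.2 hCtM) (by positivity : (0:ℝ) ≤ |x| + 1),
    mul_nonneg hM0 (sub_nonneg.2 hQ1)]

lemma sqrt2_le_two : Real.sqrt 2 ≤ 2 := by
  nlinarith [Real.sq_sqrt (show (0:ℝ) ≤ 2 by norm_num), Real.sqrt_nonneg 2]

set_option maxHeartbeats 1000000 in
/-- conditional probability bound for large increments
`|Δq_ν| + |Δζ_{1,ν}| + |Δζ_{2,ν}| > (Δt_ν)^{2/5}` of a tame discrete controlled process. -/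
theorem statement4 (Bq0 Ba Ct BT : ℝ) :
    ∃ c > (0 : ℝ), ∃ C > (0 : ℝ),
      ∀ (Ω : Type) (mΩ : MeasurableSpace Ω) (μ : Measure Ω), IsProbabilityMeasure μ →
      ∀ (N : ℕ), 1 ≤ N →
      ∀ (T : ℝ) (t : ℕ → ℝ), IsPartition N T t → T ≤ BT →
      ∀ (a q0 : ℝ), |a| ≤ Ba → |q0| ≤ Bq0 →
      ∀ (F : Filtration ℕ mΩ) (q u ΔW : ℕ → Ω → ℝ),
        TameProcess μ N t a q0 Ct F q u ΔW →
        ∀ ν < N, ∀ Q : ℝ, C ≤ Q → Q ≤ (t (ν + 1) - t ν) ^ (-(1 : ℝ) / 1000) →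
          ∀ᵐ ω ∂μ, |q ν ω| ≤ Q →
            (μ[Set.indicator
                {ω' | (t (ν + 1) - t ν) ^ ((2 : ℝ) / 5) <
                    |q (ν + 1) ω' - q ν ω'| +
                      |zeta1 t q u (ν + 1) ω' - zeta1 t q u ν ω'| +
                      |zeta2 t q (ν + 1) ω' - zeta2 t q ν ω'|}
                (fun _ => (1 : ℝ)) | F ν]) ω
              ≤ C * (t (ν + 1) - t ν) ^ (1000 : ℕ) := by
  classical
  obtain ⟨M, hM_def⟩ : ∃ x : ℝ, x = |Ba| + |Ct| := ⟨_, rfl⟩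
  obtain ⟨E, hE_def⟩ : ∃ x : ℝ, x = Real.exp (2 * M + 1) := ⟨_, rfl⟩
  have hM0 : 0 ≤ M := by rw [hM_def]; positivity
  have hE1 : 1 ≤ E := by rw [hE_def]; exact Real.one_le_exp (by linarith)
  have hE0 : 0 < E := lt_of_lt_of_le one_pos hE1
  have hfact : (0:ℝ) < (Nat.factorial 5100 : ℝ) := by exact_mod_cast Nat.factorial_pos 5100
  obtain ⟨K, hK_def⟩ : ∃ x : ℝ, x = 2 * (Nat.factorial 5100 : ℝ) * (64 * E) ^ (5100 : ℕ) :=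
    ⟨_, rfl⟩
  have hK0 : 0 < K := by
    rw [hK_def]
    exact mul_pos (mul_pos two_pos hfact) (pow_pos (by positivity) _)
  obtain ⟨C, hC_def⟩ : ∃ x : ℝ, x = 18 * (M + 1) * E + K + 1 := ⟨_, rfl⟩
  have h18 : 0 ≤ 18 * (M + 1) * E := by positivity
  have hC1 : 1 ≤ C := by rw [hC_def]; linarith
  have hC0 : 0 < C := lt_of_lt_of_le one_pos hC1
  refine ⟨1, one_pos, C, hC0, ?_⟩
  rintro Ω mΩ μ hμ N hN T t ⟨ht0, htN, hmono⟩ hT a q0 ha hq0 F q u ΔW tp ν hν Q hCQ hQδ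
  obtain ⟨δ, hδ_def⟩ : ∃ x : ℝ, x = t (ν + 1) - t ν := ⟨_, rfl⟩
  rw [← hδ_def] at hQδ ⊢
  have hδ : 0 < δ := by rw [hδ_def]; exact sub_pos.mpr (hmono ν hν)
  obtain ⟨θ, hθ_def⟩ : ∃ x : ℝ, x = δ ^ ((1:ℝ)/1000) := ⟨_, rfl⟩
  have hθ : 0 < θ := by rw [hθ_def]; exact Real.rpow_pos_of_pos hδ _
  have hQ1 : 1 ≤ Q := hC1.trans hCQ
  have hQ0 : 0 < Q := lt_of_lt_of_le one_pos hQ1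
  have hδ1 : δ ≤ 1 := by
    by_contra hcon
    push_neg at hcon
    have h := Real.rpow_lt_one_of_one_lt_of_neg hcon (show -(1:ℝ)/1000 < 0 by norm_num)
    linarith [hQ1.trans hQδ]
  have hθ1 : θ ≤ 1 := by
    rw [hθ_def]; exact Real.rpow_le_one hδ.le hδ1 (by norm_num)
  have hθδ : θ ^ (1000:ℕ) = δ := by
    rw [hθ_def, ← Real.rpow_natCast (δ ^ ((1:ℝ)/1000)) 1000, ← Real.rpow_mul hδ.le]
    norm_num
  have hθ400 : δ ^ ((2:ℝ)/5) = θ ^ (400:ℕ) := by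
    rw [hθ_def, ← Real.rpow_natCast (δ ^ ((1:ℝ)/1000)) 400, ← Real.rpow_mul hδ.le]
    norm_num
  have hQθ : Q * θ ≤ 1 := by
    have h1 : δ ^ (-(1:ℝ)/1000) = θ⁻¹ := by
      rw [hθ_def, show -(1:ℝ)/1000 = -((1:ℝ)/1000) by norm_num, Real.rpow_neg hδ.le]
    rw [h1] at hQδ
    calc Q * θ ≤ θ⁻¹ * θ := mul_le_mul_of_nonneg_right hQδ hθ.le
      _ = 1 := inv_mul_cancel₀ hθ.ne'
  have hCθ : C * θ ≤ 1 := le_trans (mul_le_mul_of_nonneg_right hCQ hθ.le) hQθ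
  have haM : |a| ≤ M := le_trans ha (le_trans (le_abs_self Ba) (by rw [hM_def]; linarith [abs_nonneg Ct]))
  have hCtM : Ct ≤ M := le_trans (le_abs_self Ct) (by rw [hM_def]; linarith [abs_nonneg Ba])
  have hs_pos : 0 < dtStar a δ := dtStar_pos hδ
  have hs_le : dtStar a δ ≤ δ * E := by
    refine le_trans (dtStar_le hδ) (mul_le_mul_of_nonneg_left ?_ hδ.le)
    rw [hE_def]
    refine Real.exp_le_exp.mpr ?_
    have hmm := mul_le_mul haM hδ1 hδ.le hM0
    linarith [abs_nonneg a]
  obtain ⟨v, hv_def⟩ : ∃ x : ℝ, x = dtTilde a δ := ⟨_, rfl⟩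
  have hv_pos : 0 < v := by rw [hv_def, dtTilde_eq]; exact dtStar_pos hδ
  have hv_le : v ≤ δ * E := by
    rw [hv_def, dtTilde_eq]
    refine le_trans (dtStar_le hδ) (mul_le_mul_of_nonneg_left ?_ hδ.le)
    rw [hE_def]
    apply Real.exp_le_exp.mpr
    rw [show |2*a| = 2 * |a| by rw [abs_mul, abs_two]]
    have hmm := mul_le_mul haM hδ1 hδ.le hM0
    linarith [abs_nonneg a]
  obtain ⟨r, hr_def⟩ : ∃ x : ℝ, x = θ ^ (400:ℕ) / (4 * Q) := ⟨_, rfl⟩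
  have hr_pos : 0 < r := by
    rw [hr_def]
    exact div_pos (pow_pos hθ _) (by linarith)
  have hQθ2 : Q ^ 2 * θ ^ 2 ≤ 1 := by
    calc Q ^ 2 * θ ^ 2 = (Q * θ) ^ 2 := by ring
      _ ≤ 1 := pow_le_one₀ (n := 2) (mul_nonneg hQ0.le hθ.le) hQθ
  -- deterministic numeric bound
  have hdet : 18 * (M + 1) * E * (Q ^ 2 * θ ^ (1000:ℕ)) ≤ θ ^ (400:ℕ) := by
    have h1 : 18 * (M + 1) * E ≤ C := by rw [hC_def]; linarith
    have h2 : 18 * (M + 1) * E * θ ≤ 1 := le_trans (mul_le_mul_of_nonneg_right h1 hθ.le) hCθ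
    have h4 : θ ^ (597:ℕ) ≤ 1 := pow_le_one₀ (n := 597) hθ.le hθ1
    calc 18 * (M + 1) * E * (Q ^ 2 * θ ^ (1000:ℕ))
        = ((18 * (M + 1) * E * θ) * (Q ^ 2 * θ ^ 2) * θ ^ (597:ℕ)) * θ ^ (400:ℕ) := by ring
      _ ≤ 1 * θ ^ (400:ℕ) := by
          refine mul_le_mul_of_nonneg_right ?_ (by positivity)
          exact mul_le_one₀ (mul_le_one₀ h2 (by positivity) hQθ2) (by positivity) h4
      _ = θ ^ (400:ℕ) := one_mul _
  -- tail numeric bound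
  have hr2 : θ ^ (802:ℕ) / 16 ≤ r ^ 2 := by
    rw [hr_def, div_pow, mul_pow]
    rw [div_le_div_iff₀ (by norm_num) (by positivity)]
    have hmul := mul_le_mul_of_nonneg_left hQθ2 (pow_nonneg hθ.le 800)
    calc θ ^ (802:ℕ) * (4 ^ 2 * Q ^ 2) = 16 * (θ ^ (800:ℕ) * (Q ^ 2 * θ ^ 2)) := by ring
      _ ≤ 16 * (θ ^ (800:ℕ) * 1) := by linarith
      _ = (θ ^ (400:ℕ)) ^ 2 * 16 := by ring
  have hx0 : (64 * E * θ ^ (198:ℕ))⁻¹ ≤ r ^ 2 / (4 * v) := by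
    rw [le_div_iff₀ (by linarith : (0:ℝ) < 4 * v)]
    have h5 : (64 * E * θ ^ (198:ℕ))⁻¹ * (4 * v) ≤ (64 * E * θ ^ (198:ℕ))⁻¹ * (4 * (δ * E)) :=
      mul_le_mul_of_nonneg_left (by linarith) (by positivity)
    have h6 : (64 * E * θ ^ (198:ℕ))⁻¹ * (4 * (δ * E)) = θ ^ (802:ℕ) / 16 := by
      rw [← hθδ]
      field_simp
      ring
    linarith
  have htail : Real.sqrt 2 * Real.exp (-(r ^ 2) / (4 * v)) ≤ C * δ ^ (1000:ℕ) := by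
    have hy : (0:ℝ) < (64 * E * θ ^ (198:ℕ))⁻¹ := by positivity
    have hexp1 : Real.exp (-(r ^ 2) / (4 * v)) ≤ Real.exp (-(64 * E * θ ^ (198:ℕ))⁻¹) := by
      apply Real.exp_le_exp.mpr
      rw [neg_div]
      exact neg_le_neg hx0
    have hexp2 : Real.exp (-(64 * E * θ ^ (198:ℕ))⁻¹) ≤
        (Nat.factorial 5100 : ℝ) * (64 * E) ^ (5100:ℕ) * θ ^ (1009800:ℕ) := by
      set y := (64 * E * θ ^ (198:ℕ))⁻¹ with hy_def
      have h8 : y ^ (5100:ℕ) / (Nat.factorial 5100 : ℝ) ≤ Real.exp y :=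
        Real.pow_div_factorial_le_exp (x := y) hy.le 5100
      have h9 : 0 < y ^ (5100:ℕ) / (Nat.factorial 5100 : ℝ) := div_pos (pow_pos hy _) hfact
      calc Real.exp (-y) = (Real.exp y)⁻¹ := Real.exp_neg y
        _ ≤ (y ^ (5100:ℕ) / (Nat.factorial 5100 : ℝ))⁻¹ := inv_anti₀ h9 h8
        _ = (Nat.factorial 5100 : ℝ) * (y⁻¹) ^ (5100:ℕ) := by
            rw [inv_div, div_eq_mul_inv, ← inv_pow]
        _ = (Nat.factorial 5100 : ℝ) * (64 * E) ^ (5100:ℕ) * θ ^ (1009800:ℕ) := by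
            rw [hy_def, inv_inv, mul_pow, ← pow_mul]
            norm_num
            ring
    have hθbig : θ ^ (1009800:ℕ) ≤ δ ^ (1000:ℕ) * δ := by
      have ha1 : θ ^ (1009800:ℕ) ≤ θ ^ (1001000:ℕ) :=
        pow_le_pow_of_le_one hθ.le hθ1 (by norm_num)
      have ha2 : θ ^ (1001000:ℕ) = δ ^ (1000:ℕ) * δ := by
        rw [← hθδ, ← pow_mul, ← pow_add]
      linarith
    have hsqrt2 : Real.sqrt 2 ≤ 2 := sqrt2_le_two
    have hcoef : 0 ≤ (Nat.factorial 5100 : ℝ) * (64 * E) ^ (5100:ℕ) :=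
      mul_nonneg hfact.le (by positivity)
    calc Real.sqrt 2 * Real.exp (-(r ^ 2) / (4 * v))
        ≤ 2 * ((Nat.factorial 5100 : ℝ) * (64 * E) ^ (5100:ℕ) * (δ ^ (1000:ℕ) * δ)) := by
          refine mul_le_mul hsqrt2 ?_ (Real.exp_pos _).le (by norm_num)
          refine le_trans hexp1 (le_trans hexp2 ?_)
          exact mul_le_mul_of_nonneg_left hθbig hcoef
      _ = (K * δ) * δ ^ (1000:ℕ) := by rw [hK_def]; ring
      _ ≤ C * δ ^ (1000:ℕ) := by
          refine mul_le_mul_of_nonneg_right ?_ (by positivity)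
          have : K * δ ≤ K := mul_le_of_le_one_right hK0.le hδ1
          rw [hC_def]; linarith
  -- measure-theoretic part
  have hSm : MeasurableSet {x : ℝ | r ≤ |x|} :=
    (isClosed_le continuous_const continuous_abs).measurableSet
  have hW_meas : Measurable (ΔW ν) := (tp.w_meas ν hν).mono (F.le (ν + 1)) le_rfl
  obtain ⟨D, hD_def⟩ : ∃ s : Set Ω, s = ΔW ν ⁻¹' {x : ℝ | r ≤ |x|} := ⟨_, rfl⟩
  have hDm : MeasurableSet D := by rw [hD_def]; exact hW_meas hSm
  obtain ⟨B, hB_def⟩ : ∃ s : Set Ω, s = {ω' : Ω | Q < |q ν ω'|} := ⟨_, rfl⟩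
  have hBmF : MeasurableSet[F ν] B := by
    rw [hB_def]
    exact tp.q_meas ν hν.le ((isOpen_lt continuous_const continuous_abs).measurableSet)
  have hBm : MeasurableSet B := F.le ν B hBmF
  obtain ⟨A, hA_def⟩ : ∃ s : Set Ω, s = {ω' : Ω | δ ^ ((2:ℝ)/5) <
      |q (ν + 1) ω' - q ν ω'| + |zeta1 t q u (ν + 1) ω' - zeta1 t q u ν ω'| +
        |zeta2 t q (ν + 1) ω' - zeta2 t q ν ω'|} := ⟨_, rfl⟩
  rw [← hA_def]
  have e1 : ∀ ω', zeta1 t q u (ν + 1) ω' - zeta1 t q u ν ω' =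
      q ν ω' * ((q (ν + 1) ω' - q ν ω') - u ν ω' * δ) := by
    intro ω'
    rw [hδ_def]
    simp [zeta1, Finset.sum_range_succ]
  have e2 : ∀ ω', zeta2 t q (ν + 1) ω' - zeta2 t q ν ω' = (q ν ω') ^ 2 * δ := by
    intro ω'
    rw [hδ_def]
    simp [zeta2, Finset.sum_range_succ]
  have hA_eq : A = {ω' : Ω | δ ^ ((2:ℝ)/5) <
      |q (ν + 1) ω' - q ν ω'| + |q ν ω' * ((q (ν + 1) ω' - q ν ω') - u ν ω' * δ)| +
        |(q ν ω') ^ 2 * δ|} := by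
    rw [hA_def]
    ext ω'
    simp only [Set.mem_setOf_eq, e1, e2]
  have hq1m : Measurable (q ν) := (tp.q_meas ν hν.le).mono (F.le ν) le_rfl
  have hq2m : Measurable (q (ν + 1)) := (tp.q_meas (ν + 1) hν).mono (F.le (ν + 1)) le_rfl
  have hum : Measurable (u ν) := (tp.u_meas ν hν).mono (F.le ν) le_rfl
  have hAm : MeasurableSet A := by
    rw [hA_eq]
    apply measurableSet_lt measurable_const
    exact (((hq2m.sub hq1m).abs.add
      ((hq1m.mul ((hq2m.sub hq1m).sub (hum.mul measurable_const))).abs)).add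
      (((hq1m.pow_const 2).mul measurable_const).abs))
  have hf_int : Integrable (A.indicator (fun _ => (1:ℝ))) μ := (integrable_const 1).indicator hAm
  have hg1_int : Integrable (B.indicator (fun _ => (1:ℝ))) μ := (integrable_const 1).indicator hBm
  have hg2_int : Integrable (D.indicator (fun _ => (1:ℝ))) μ := (integrable_const 1).indicator hDm
  have find : ∀ (s : Set Ω) (ω0 : Ω),
      s.indicator (fun _ => (1:ℝ)) ω0 ≤ 1 ∧ 0 ≤ s.indicator (fun _ => (1:ℝ)) ω0 := by
    intro s ω0
    unfold Set.indicator
    split_ifs <;> norm_num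
  -- deterministic key lemma
  have key : ∀ ω', q (ν + 1) ω' = q ν ω' + (a * q ν ω' + u ν ω') * dtStar a δ + ΔW ν ω' →
      |u ν ω'| ≤ Ct * (|q ν ω'| + 1) → ω' ∉ B → ω' ∉ D → ω' ∉ A := by
    intro ω' hstep htame hB' hD'
    rw [hB_def] at hB'
    simp only [Set.mem_setOf_eq, not_lt] at hB'
    rw [hD_def] at hD'
    simp only [Set.mem_preimage, Set.mem_setOf_eq, not_le] at hD'
    rw [hA_eq]
    simp only [Set.mem_setOf_eq, not_lt]
    rw [hθ400]
    have hΔ : q (ν + 1) ω' - q ν ω' = (a * q ν ω' + u ν ω') * dtStar a δ + ΔW ν ω' := by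
      rw [hstep]; ring
    have hax : |a * q ν ω'| ≤ M * Q := by
      rw [abs_mul]
      exact mul_le_mul haM hB' (abs_nonneg _) hM0
    have huu : |u ν ω'| ≤ 2 * M * Q := u_bound M Q Ct _ _ hCtM hM0 hQ1 hB' htame
    have h1 : |q (ν + 1) ω' - q ν ω'| ≤ 3 * M * Q * (δ * E) + r := by
      rw [hΔ]
      refine le_trans (abs_add_le _ _) ?_
      have hh : |(a * q ν ω' + u ν ω') * dtStar a δ| ≤ 3 * M * Q * (δ * E) := by
        rw [abs_mul, abs_of_pos hs_pos]
        refine mul_le_mul ?_ hs_le hs_pos.le (by positivity)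
        calc |a * q ν ω' + u ν ω'| ≤ |a * q ν ω'| + |u ν ω'| := abs_add_le _ _
          _ ≤ 3 * M * Q := by linarith
      linarith [hD'.le]
    have h2 : |q ν ω' * ((q (ν + 1) ω' - q ν ω') - u ν ω' * δ)| ≤
        Q * ((3 * M * Q * (δ * E) + r) + 2 * M * Q * δ) := by
      rw [abs_mul]
      refine mul_le_mul hB' ?_ (abs_nonneg _) (by linarith)
      have hsub : |(q (ν + 1) ω' - q ν ω') - u ν ω' * δ| ≤
          |q (ν + 1) ω' - q ν ω'| + |u ν ω' * δ| := by
        rw [sub_eq_add_neg]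
        refine le_trans (abs_add_le _ _) ?_
        rw [abs_neg]
      have huδ : |u ν ω' * δ| ≤ 2 * M * Q * δ := by
        rw [abs_mul, abs_of_pos hδ]
        exact mul_le_mul_of_nonneg_right huu hδ.le
      linarith
    have h3 : |(q ν ω') ^ 2 * δ| ≤ Q ^ 2 * δ := by
      rw [abs_mul, abs_of_pos hδ, abs_pow, sq_abs]
      refine mul_le_mul_of_nonneg_right ?_ hδ.le
      calc (q ν ω') ^ 2 = |q ν ω'| ^ 2 := (sq_abs _).symm
        _ ≤ Q ^ 2 := pow_le_pow_left₀ (abs_nonneg _) hB' 2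
    have h2Qr : 2 * Q * r = θ ^ (400:ℕ) / 2 := by
      rw [hr_def]
      field_simp
      ring
    have hbig : 9 * (M + 1) * E * (Q ^ 2 * δ) ≤ θ ^ (400:ℕ) / 2 := by
      rw [← hθδ]
      linarith [hdet]
    have hsum : |q (ν + 1) ω' - q ν ω'| +
        |q ν ω' * ((q (ν + 1) ω' - q ν ω') - u ν ω' * δ)| + |(q ν ω') ^ 2 * δ| ≤
        9 * (M + 1) * E * (Q ^ 2 * δ) + 2 * Q * r :=
      sum_bound M Q E δ r _ _ _ hM0 hQ1 hE1 hδ hr_pos h1 h2 h3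
    calc |q (ν + 1) ω' - q ν ω'| +
        |q ν ω' * ((q (ν + 1) ω' - q ν ω') - u ν ω' * δ)| + |(q ν ω') ^ 2 * δ| ≤
        9 * (M + 1) * E * (Q ^ 2 * δ) + 2 * Q * r := hsum
      _ ≤ θ ^ (400:ℕ) / 2 + θ ^ (400:ℕ) / 2 := by linarith
      _ = θ ^ (400:ℕ) := by ring
  -- pointwise indicator bound a.e.
  have hptwise : A.indicator (fun _ => (1:ℝ)) ≤ᵐ[μ]
      B.indicator (fun _ => (1:ℝ)) + D.indicator (fun _ => (1:ℝ)) := by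
    filter_upwards [tp.q_step ν hν, tp.u_tame ν hν] with ω' hstep htame
    simp only [Pi.add_apply]
    by_cases hB' : ω' ∈ B
    · rw [Set.indicator_of_mem hB']
      linarith [(find A ω').1, (find D ω').2]
    by_cases hD' : ω' ∈ D
    · rw [Set.indicator_of_mem hD']
      linarith [(find A ω').1, (find B ω').2]
    have hA' : ω' ∉ A := by
      refine key ω' ?_ htame hB' hD'
      rw [hδ_def]
      exact hstep
    rw [Set.indicator_of_notMem hA']
    linarith [(find B ω').2, (find D ω').2]
  -- conditional expectation chain
  have hcond1 : μ[A.indicator (fun _ => (1:ℝ))|F ν] ≤ᵐ[μ]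
      μ[(B.indicator (fun _ => (1:ℝ)) + D.indicator (fun _ => (1:ℝ)))|F ν] :=
    condExp_mono hf_int (hg1_int.add hg2_int) hptwise
  have hcond2 : μ[(B.indicator (fun _ => (1:ℝ)) + D.indicator (fun _ => (1:ℝ)))|F ν] =ᵐ[μ]
      μ[B.indicator (fun _ => (1:ℝ))|F ν] + μ[D.indicator (fun _ => (1:ℝ))|F ν] :=
    condExp_add hg1_int hg2_int _
  have hcond3 : μ[B.indicator (fun _ => (1:ℝ))|F ν] = B.indicator (fun _ => (1:ℝ)) :=
    condExp_of_stronglyMeasurable (F.le ν)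
      (stronglyMeasurable_const.indicator hBmF) hg1_int
  have hmc : MeasurableSpace.comap (ΔW ν) inferInstance ≤ mΩ := hW_meas.comap_le
  have hDmc : MeasurableSet[MeasurableSpace.comap (ΔW ν) inferInstance] D := by
    rw [hD_def]
    exact ⟨{x : ℝ | r ≤ |x|}, hSm, rfl⟩
  have hcond4 : μ[D.indicator (fun _ => (1:ℝ))|F ν] =ᵐ[μ]
      fun _ => ∫ ω', D.indicator (fun _ => (1:ℝ)) ω' ∂μ :=
    condExp_indep_eq hmc (F.le ν) (stronglyMeasurable_const.indicator hDmc) (tp.w_indep ν hν)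
  have hval : ∫ ω', D.indicator (fun _ => (1:ℝ)) ω' ∂μ = (μ D).toReal :=
    integral_indicator_one hDm
  have hmap : μ D = gaussianReal 0 (dtTilde a δ).toNNReal {x : ℝ | r ≤ |x|} := by
    rw [hD_def, ← Measure.map_apply hW_meas hSm, tp.w_law ν hν, hδ_def]
  have hvNN : (((dtTilde a δ).toNNReal : ℝ≥0) : ℝ) = v := by
    have h0 : 0 ≤ dtTilde a δ := by rw [← hv_def]; exact hv_pos.le
    rw [hv_def]
    exact Real.coe_toNNReal _ h0
  have hfinal_tail : (μ D).toReal ≤ C * δ ^ (1000:ℕ) := by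
    rw [hmap]
    refine le_trans (gauss_tail _ (by rw [hvNN]; exact hv_pos) r hr_pos.le) ?_
    rw [hvNN]
    exact htail
  -- conclusion
  filter_upwards [hcond1, hcond2, hcond4] with ω h1 h2 h4 hq
  have hnB : ω ∉ B := by
    rw [hB_def]
    simp only [Set.mem_setOf_eq, not_lt]
    exact hq
  calc (μ[A.indicator (fun _ => (1:ℝ))|F ν]) ω
      ≤ (μ[(B.indicator (fun _ => (1:ℝ)) + D.indicator (fun _ => (1:ℝ)))|F ν]) ω := h1
    _ = (μ[B.indicator (fun _ => (1:ℝ))|F ν]) ω + (μ[D.indicator (fun _ => (1:ℝ))|F ν]) ω := h2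
    _ = B.indicator (fun _ => (1:ℝ)) ω + ∫ ω', D.indicator (fun _ => (1:ℝ)) ω' ∂μ := by
        rw [hcond3, h4]
    _ = (μ D).toReal := by rw [Set.indicator_of_notMem hnB, hval, zero_add]
    _ ≤ C * δ ^ (1000:ℕ) := hfinal_tail
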